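/- (Local sensitivity of Lasso solutions.) Let λ > 0, y ∈ ℝ^P, and let x⋆ be a minimizer of x ↦ (1/(2λ))‖Φx − y‖² + ‖x‖₁ with I = supp(x⋆). Assume (φ_j)_{j∈I} is linearly independent and that |⟨φ_j, y − Φx⋆⟩| < λ for every j ∉ I. Then there exist an open neighborhood V of y and a continuously differentiable (indeed affine) map x̃ : V → ℝ^N such that x̃(y) = x⋆, for every ȳ ∈ V the vector x̃(ȳ) is a minimizer of x ↦ (1/(2λ))‖Φx − ȳ‖² + ‖x‖₁ with supp(x̃(ȳ)) ⊆ I, and x̃(ȳ) = x⋆ + E_I (Φ_I^⊤Φ_I)^{-1} Φ_I^⊤ (ȳ − y), where E_I : ℝ^{|I|} → ℝ^N is the natural embedding placing coordinates on the index set I and zeros elsewhere. -/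

import Mathlib

open Matrix

/-- Euclidean dot product on `ℝ^n`. -/
noncomputable def dotp {n : ℕ} (u v : Fin n → ℝ) : ℝ := ∑ i, u i * v i

/-- Euclidean (ℓ²) norm on `ℝ^n`. -/
noncomputable def nrm2 {n : ℕ} (u : Fin n → ℝ) : ℝ := Real.sqrt (∑ i, (u i) ^ 2)

/-- ℓ¹ norm on `ℝ^n`. -/
noncomputable def l1norm {n : ℕ} (u : Fin n → ℝ) : ℝ := ∑ i, |u i|

/-- ℓ^∞ norm of a finitely indexed real vector. -/
noncomputable def linf {ι : Type*} [Fintype ι] (u : ι → ℝ) : ℝ := ⨆ i, |u i|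

/-- The sign function: 1 for positive, -1 for negative, 0 at 0. -/
noncomputable def sgn (t : ℝ) : ℝ := if 0 < t then 1 else if t < 0 then -1 else 0

/-- Subdifferential of a finite-valued function `J : ℝ^n → ℝ` at `x`:
`∂J(x) = {η : J(x+δ) ≥ J(x) + ⟨η,δ⟩ for all δ}`. -/
def subdiff {n : ℕ} (J : (Fin n → ℝ) → ℝ) (x : Fin n → ℝ) : Set (Fin n → ℝ) :=
  {η | ∀ δ, J x + dotp η δ ≤ J (x + δ)}

/-- The model tangent subspace `T_x = Lin(∂J(x))^⊥`, where `Lin(E)` is the linear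
space parallel to the affine hull of `E`. -/
def modelT {n : ℕ} (J : (Fin n → ℝ) → ℝ) (x : Fin n → ℝ) : Set (Fin n → ℝ) :=
  {u | ∀ v ∈ (affineSpan ℝ (subdiff J x)).direction, dotp u v = 0}

/-- Support of `x` as a finite set of indices. -/
noncomputable def suppF {n : ℕ} (x : Fin n → ℝ) : Finset (Fin n) :=
  Finset.univ.filter fun i => x i ≠ 0

/-- The submatrix `Φ_I` of columns of `Φ` indexed by `I`. -/
noncomputable def colsub {N P : ℕ} (Φ : Matrix (Fin P) (Fin N) ℝ) (I : Finset (Fin N)) :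
    Matrix (Fin P) ↥I ℝ := Φ.submatrix id (↑)

/-- The vector `p_F = Φ_I (Φ_I^⊤ Φ_I)⁻¹ s` for a sign vector `s` on `I`. -/
noncomputable def pFvec {N P : ℕ} (Φ : Matrix (Fin P) (Fin N) ℝ) (I : Finset (Fin N))
    (s : ↥I → ℝ) : Fin P → ℝ :=
  (colsub Φ I).mulVec ((((colsub Φ I)ᵀ * (colsub Φ I))⁻¹).mulVec s)

/-- The irrepresentable-condition quantity `‖Φ_{I^c}^⊤ Φ_I (Φ_I^⊤Φ_I)⁻¹ s‖_∞`. -/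
noncomputable def ICval {N P : ℕ} (Φ : Matrix (Fin P) (Fin N) ℝ) (I : Finset (Fin N))
    (s : ↥I → ℝ) : ℝ :=
  linf ((Φ.submatrix id ((↑) : {j // j ∉ I} → Fin N))ᵀ.mulVec (pFvec Φ I s))

/-- The natural embedding `E_I : ℝ^{|I|} → ℝ^N` placing coordinates on `I` and
zeros elsewhere. -/
noncomputable def embedI {n : ℕ} (I : Finset (Fin n)) (v : ↥I → ℝ) : Fin n → ℝ :=
  fun i => if h : i ∈ I then v ⟨i, h⟩ else 0


section Stmt14Aux

lemma dotp_eq' {n : ℕ} (u v : Fin n → ℝ) : dotp u v = u ⬝ᵥ v := rfl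

lemma nrm2_sq' {n : ℕ} (u : Fin n → ℝ) : nrm2 u ^ 2 = dotp u u := by
  have h : (0:ℝ) ≤ ∑ i, u i ^ 2 := Finset.sum_nonneg fun i _ => sq_nonneg _
  rw [nrm2, Real.sq_sqrt h, dotp]
  exact Finset.sum_congr rfl fun i _ => pow_two (u i)

lemma dotp_self_nonneg' {n : ℕ} (u : Fin n → ℝ) : 0 ≤ dotp u u :=
  Finset.sum_nonneg fun i _ => mul_self_nonneg _

lemma nrm2_expand' {n : ℕ} (u w : Fin n → ℝ) :
    nrm2 (u + w) ^ 2 = nrm2 u ^ 2 + 2 * dotp u w + dotp w w := by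
  rw [nrm2_sq', nrm2_sq', dotp_eq', dotp_eq', dotp_eq', add_dotProduct, dotProduct_add,
    dotProduct_add, dotProduct_comm w u, dotp_eq']
  ring

lemma abs_pert_sgn' (c z : ℝ) (h : |z - c| < |c|) : sgn c * z = |z| := by
  have hc : c ≠ 0 := by
    intro hc; rw [hc, abs_zero] at h; exact absurd h (not_lt.mpr (abs_nonneg _))
  rw [abs_lt] at h
  rcases hc.lt_or_gt with hneg | hpos
  · have hz : z < 0 := by rw [abs_of_neg hneg] at h; linarith
    rw [sgn, if_neg (by linarith), if_pos hneg, abs_of_neg hz]; ring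
  · have hz : 0 < z := by rw [abs_of_pos hpos] at h; linarith
    rw [sgn, if_pos hpos, abs_of_pos hz]; ring

lemma abs_pert_eq' (c t : ℝ) (h : |t| < |c|) : |c + t| = |c| + sgn c * t := by
  have hc : c ≠ 0 := by
    intro hc; rw [hc, abs_zero] at h; exact absurd h (not_lt.mpr (abs_nonneg _))
  rw [abs_lt] at h
  rcases hc.lt_or_gt with hneg | hpos
  · have hz : c + t < 0 := by rw [abs_of_neg hneg] at h; linarith
    rw [sgn, if_neg (by linarith), if_pos hneg, abs_of_neg hz, abs_of_neg hneg]; ring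
  · have hz : 0 < c + t := by rw [abs_of_pos hpos] at h; linarith
    rw [sgn, if_pos hpos, abs_of_pos hz, abs_of_pos hpos]; ring

lemma sgn_abs' (c : ℝ) (hc : c ≠ 0) : |sgn c| = 1 := by
  rcases hc.lt_or_gt with hneg | hpos
  · rw [sgn, if_neg (by linarith), if_pos hneg]; norm_num
  · rw [sgn, if_pos hpos]; norm_num

lemma quad_zero' (m B r : ℝ) (hB : 0 ≤ B) (hr : 0 < r)
    (h : ∀ t, |t| < r → 0 ≤ t * m + t ^ 2 * B) : m = 0 := by
  by_contra hm
  have hma : 0 < |m| := abs_pos.mpr hm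
  set ε : ℝ := min (r / (2 * |m|)) (1 / (B + 1)) with hεdef
  have hε0 : 0 < ε := lt_min (div_pos hr (by positivity)) (by positivity)
  set t : ℝ := -(ε * m) with htdef
  have ht : |t| < r := by
    have h1 : |t| = ε * |m| := by rw [htdef, abs_neg, abs_mul, abs_of_pos hε0]
    have h2 : ε * |m| ≤ (r / (2 * |m|)) * |m| :=
      mul_le_mul_of_nonneg_right (min_le_left _ _) (le_of_lt hma)
    have h3 : (r / (2 * |m|)) * |m| = r / 2 := by field_simp
    rw [h1]; linarith
  have hεB : ε * B < 1 := by
    have h2 : ε * B ≤ (1 / (B + 1)) * B :=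
      mul_le_mul_of_nonneg_right (min_le_right _ _) hB
    have h3 : (1 / (B + 1)) * B < 1 := by
      rw [div_mul_eq_mul_div, one_mul, div_lt_one (by linarith)]; linarith
    linarith
  have hkey : t * m + t ^ 2 * B = ε * m ^ 2 * (ε * B - 1) := by rw [htdef]; ring
  have hneg : ε * m ^ 2 * (ε * B - 1) < 0 :=
    mul_neg_of_pos_of_neg (by positivity) (by linarith)
  have := h t ht
  linarith

lemma lasso_min' {N P : ℕ} (Φ : Matrix (Fin P) (Fin N) ℝ) (lam : ℝ) (hlam : 0 < lam)
    (yb : Fin P → ℝ) (xh : Fin N → ℝ)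
    (h1 : ∀ j, |dotp (Φᵀ j) (yb - Φ.mulVec xh)| ≤ lam)
    (h2 : ∀ j, dotp (Φᵀ j) (yb - Φ.mulVec xh) * xh j = lam * |xh j|) :
    ∀ x, (1 / (2 * lam)) * nrm2 (Φ.mulVec xh - yb) ^ 2 + l1norm xh ≤
         (1 / (2 * lam)) * nrm2 (Φ.mulVec x - yb) ^ 2 + l1norm x := by
  intro x
  set δ : Fin N → ℝ := x - xh with hδ
  have hΦ : Φ.mulVec x - yb = (Φ.mulVec xh - yb) + Φ.mulVec δ := by
    rw [hδ, Matrix.mulVec_sub]; abel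
  set c : Fin N → ℝ := fun j => dotp (Φᵀ j) (yb - Φ.mulVec xh) with hcdef
  set S : ℝ := ∑ j, c j * δ j with hS
  have hcross : dotp (Φ.mulVec xh - yb) (Φ.mulVec δ) = -S := by
    rw [dotp_eq', dotProduct_mulVec, ← Matrix.mulVec_transpose, hS]
    have hh : ∀ j, (Φᵀ.mulVec (Φ.mulVec xh - yb)) j = - c j := by
      intro j
      show Φᵀ j ⬝ᵥ (Φ.mulVec xh - yb) = -(Φᵀ j ⬝ᵥ (yb - Φ.mulVec xh))
      rw [dotProduct_sub, dotProduct_sub]; ring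
    unfold dotProduct
    rw [← Finset.sum_neg_distrib]
    exact Finset.sum_congr rfl fun j _ => by rw [hh j]; ring
  have hquad : nrm2 (Φ.mulVec x - yb) ^ 2
      = nrm2 (Φ.mulVec xh - yb) ^ 2 - 2 * S + dotp (Φ.mulVec δ) (Φ.mulVec δ) := by
    rw [hΦ, nrm2_expand', hcross]; ring
  have hl1 : lam * l1norm xh + S ≤ lam * l1norm x := by
    rw [hS, l1norm, l1norm, Finset.mul_sum, Finset.mul_sum, ← Finset.sum_add_distrib]
    apply Finset.sum_le_sum
    intro j _
    have hcx : c j * x j ≤ lam * |x j| := by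
      calc c j * x j ≤ |c j * x j| := le_abs_self _
        _ = |c j| * |x j| := abs_mul _ _
        _ ≤ lam * |x j| := mul_le_mul_of_nonneg_right (h1 j) (abs_nonneg _)
    have hc : c j = dotp (Φᵀ j) (yb - Φ.mulVec xh) := rfl
    have hδj : δ j = x j - xh j := rfl
    rw [hδj, hc]
    rw [hc] at hcx
    linarith [h2 j, hcx]
  have hQ : 0 ≤ dotp (Φ.mulVec δ) (Φ.mulVec δ) := dotp_self_nonneg' _
  have hexp : (1 / (2 * lam)) * (nrm2 (Φ.mulVec xh - yb) ^ 2 - 2 * S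
        + dotp (Φ.mulVec δ) (Φ.mulVec δ))
      = (1 / (2 * lam)) * nrm2 (Φ.mulVec xh - yb) ^ 2 - S / lam
        + (1 / (2 * lam)) * dotp (Φ.mulVec δ) (Φ.mulVec δ) := by
    field_simp
  have hl1' : l1norm xh + S / lam ≤ l1norm x := by
    have h' : S ≤ (l1norm x - l1norm xh) * lam := by nlinarith [hl1]
    have := (div_le_iff₀ hlam).mpr h'
    linarith
  rw [hquad, hexp]
  have hQ' : 0 ≤ (1 / (2 * lam)) * dotp (Φ.mulVec δ) (Φ.mulVec δ) :=
    mul_nonneg (by positivity) hQ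
  linarith [hl1', hQ']

lemma kkt_support' {N P : ℕ} (Φ : Matrix (Fin P) (Fin N) ℝ) (lam : ℝ) (hlam : 0 < lam)
    (y : Fin P → ℝ) (xs : Fin N → ℝ)
    (hmin : ∀ x, (1 / (2 * lam)) * nrm2 (Φ.mulVec xs - y) ^ 2 + l1norm xs ≤
                 (1 / (2 * lam)) * nrm2 (Φ.mulVec x - y) ^ 2 + l1norm x)
    (j : Fin N) (hj : xs j ≠ 0) :
    dotp (Φᵀ j) (y - Φ.mulVec xs) = lam * sgn (xs j) := by
  set a : ℝ := dotp (Φᵀ j) (y - Φ.mulVec xs) with ha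
  set q : ℝ := dotp (Φᵀ j) (Φᵀ j) with hq
  have hq0 : 0 ≤ q := dotp_self_nonneg' _
  have key : ∀ t : ℝ, |t| < |xs j| →
      0 ≤ t * (lam * sgn (xs j) - a) + t ^ 2 * (q / 2) := by
    intro t ht
    have hmem := hmin (xs + Pi.single j t)
    have hΦ : Φ.mulVec (xs + Pi.single j t) - y = (Φ.mulVec xs - y) + t • (Φᵀ j) := by
      rw [Matrix.mulVec_add, Matrix.mulVec_single]
      funext p
      simp [Pi.smul_apply, transpose_apply]
      ring
    have hquad : nrm2 (Φ.mulVec (xs + Pi.single j t) - y) ^ 2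
        = nrm2 (Φ.mulVec xs - y) ^ 2 - 2 * t * a + t ^ 2 * q := by
      rw [hΦ, nrm2_expand']
      have h1 : dotp (Φ.mulVec xs - y) (t • Φᵀ j) = - (t * a) := by
        rw [ha, dotp_eq', dotp_eq', dotProduct_smul, dotProduct_comm, dotProduct_sub]
        simp [smul_eq_mul]
        ring
      have h2 : dotp (t • Φᵀ j) (t • Φᵀ j) = t ^ 2 * q := by
        rw [hq, dotp_eq', dotp_eq', smul_dotProduct, dotProduct_smul, smul_eq_mul,
          smul_eq_mul]
        ring
      rw [h1, h2]; ring
    have hl1 : l1norm (xs + Pi.single j t) = l1norm xs + sgn (xs j) * t := by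
      have e1 : l1norm (xs + Pi.single j t)
          = ∑ i, |xs i + (Pi.single j t : Fin N → ℝ) i| := by
        simp [l1norm]
      rw [e1, l1norm,
          ← Finset.sum_erase_add _ (fun i => |xs i + (Pi.single j t : Fin N → ℝ) i|)
            (Finset.mem_univ j),
          ← Finset.sum_erase_add _ (fun i => |xs i|) (Finset.mem_univ j)]
      have hsum : ∑ i ∈ Finset.univ.erase j, |xs i + (Pi.single j t : Fin N → ℝ) i|
          = ∑ i ∈ Finset.univ.erase j, |xs i| := by
        apply Finset.sum_congr rfl
        intro i hi
        have hij : i ≠ j := Finset.ne_of_mem_erase hi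
        simp [Pi.single_eq_of_ne hij]
      rw [hsum]
      have h6 : |xs j + (Pi.single j t : Fin N → ℝ) j| = |xs j| + sgn (xs j) * t := by
        rw [Pi.single_eq_same]
        exact abs_pert_eq' (xs j) t ht
      rw [h6]; ring
    rw [hquad, hl1] at hmem
    have hexp : (1 / (2 * lam)) * (nrm2 (Φ.mulVec xs - y) ^ 2 - 2 * t * a + t ^ 2 * q)
        = (1 / (2 * lam)) * nrm2 (Φ.mulVec xs - y) ^ 2
          + (1 / lam) * (- (t * a) + t ^ 2 * (q / 2)) := by
      field_simp; ring
    rw [hexp] at hmem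
    have h3 : 0 ≤ (1 / lam) * (- (t * a) + t ^ 2 * (q / 2)) + sgn (xs j) * t := by
      linarith
    have h4 : 0 ≤ lam * ((1 / lam) * (- (t * a) + t ^ 2 * (q / 2)) + sgn (xs j) * t) :=
      mul_nonneg (le_of_lt hlam) h3
    have h5 : lam * ((1 / lam) * (- (t * a) + t ^ 2 * (q / 2)) + sgn (xs j) * t)
        = t * (lam * sgn (xs j) - a) + t ^ 2 * (q / 2) := by
      field_simp; ring
    rw [h5] at h4
    exact h4
  have := quad_zero' (lam * sgn (xs j) - a) (q / 2) (|xs j|) (by linarith)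
    (abs_pos.mpr hj) key
  linarith

lemma mem_suppF' {n : ℕ} (x : Fin n → ℝ) (i : Fin n) : i ∈ suppF x ↔ x i ≠ 0 := by
  simp [suppF]

lemma embed_mem' {n : ℕ} (I : Finset (Fin n)) (v : ↥I → ℝ) (k : ↥I) :
    embedI I v (k : Fin n) = v k := by simp [embedI]

lemma embed_notmem' {n : ℕ} (I : Finset (Fin n)) (v : ↥I → ℝ) (i : Fin n) (hi : i ∉ I) :
    embedI I v i = 0 := by simp [embedI, hi]

lemma gram_unit' {N P : ℕ} (Φ : Matrix (Fin P) (Fin N) ℝ) (I : Finset (Fin N))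
    (hli : LinearIndependent ℝ (fun i : ↥I => Φᵀ (i : Fin N))) :
    IsUnit ((colsub Φ I)ᵀ * colsub Φ I).det := by
  set A := colsub Φ I with hA
  rw [isUnit_iff_ne_zero]
  intro hdet
  obtain ⟨v, hv0, hv⟩ := (Matrix.exists_mulVec_eq_zero_iff).mpr hdet
  have hAv : A.mulVec v = 0 := by
    have h1 : (A.mulVec v) ⬝ᵥ (A.mulVec v) = 0 := by
      rw [dotProduct_mulVec, ← Matrix.mulVec_transpose, Matrix.mulVec_mulVec, hv,
        zero_dotProduct]
    have h2 : ∀ p, A.mulVec v p * A.mulVec v p = 0 := by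
      intro p
      have := (Finset.sum_eq_zero_iff_of_nonneg
        (fun i _ => mul_self_nonneg (A.mulVec v i))).mp h1
      exact this p (Finset.mem_univ p)
    funext p
    exact mul_self_eq_zero.mp (h2 p)
  have hlin : ∑ i : ↥I, v i • (fun p => Φ p (i : Fin N)) = (0 : Fin P → ℝ) := by
    funext p
    rw [← hAv]
    simp [Matrix.mulVec, dotProduct, hA, colsub]
    exact Finset.sum_congr rfl fun i _ => mul_comm _ _
  have := Fintype.linearIndependent_iff.mp hli v (by convert hlin using 2; rfl)
  exact hv0 (funext fun i => this i)

lemma mulVec_embed' {N P : ℕ} (Φ : Matrix (Fin P) (Fin N) ℝ) (I : Finset (Fin N))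
    (v : ↥I → ℝ) : Φ.mulVec (embedI I v) = (colsub Φ I).mulVec v := by
  funext p
  show ∑ k, Φ p k * embedI I v k = ∑ k : ↥I, colsub Φ I p k * v k
  rw [← Finset.sum_subset (Finset.subset_univ I)
    (fun k _ hk => by rw [embed_notmem' I v k hk, mul_zero])]
  rw [← Finset.sum_attach I (fun k => Φ p k * embedI I v k)]
  show _ = ∑ k ∈ I.attach, colsub Φ I p k * v k
  exact Finset.sum_congr rfl fun k _ => by rw [embed_mem']; rfl

/-- The embedding as matrix multiplication. -/
noncomputable def Ematrix' {n : ℕ} (I : Finset (Fin n)) : Matrix (Fin n) ↥I ℝ :=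
  fun i k => if (k : Fin n) = i then 1 else 0

lemma embed_eq_mulVec' {n : ℕ} (I : Finset (Fin n)) (v : ↥I → ℝ) :
    embedI I v = (Ematrix' I).mulVec v := by
  funext i
  show embedI I v i = ∑ k : ↥I, (if (k : Fin n) = i then (1:ℝ) else 0) * v k
  by_cases h : i ∈ I
  · rw [embedI, dif_pos h, Finset.sum_eq_single (⟨i, h⟩ : ↥I)]
    · simp
    · intro k _ hk
      rw [if_neg (fun he => hk (Subtype.ext he)), zero_mul]
    · intro hk; exact absurd (Finset.mem_univ _) hk
  · rw [embed_notmem' I v i h]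
    exact (Finset.sum_eq_zero fun k _ => by
      rw [if_neg (fun he => h (by rw [← he]; exact k.2)), zero_mul]).symm

/-- The affine Lasso solution map. -/
noncomputable def xtmap' {N P : ℕ} (Φ : Matrix (Fin P) (Fin N) ℝ) (y : Fin P → ℝ)
    (xs : Fin N → ℝ) : (Fin P → ℝ) → (Fin N → ℝ) :=
  fun yb => xs + embedI (suppF xs)
    ((((colsub Φ (suppF xs))ᵀ * (colsub Φ (suppF xs)))⁻¹).mulVec
      ((colsub Φ (suppF xs))ᵀ.mulVec (yb - y)))

lemma contDiff_mulVec' {m n : Type*} [Fintype m] [Fintype n] (M : Matrix m n ℝ) :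
    ContDiff ℝ 1 (fun w : n → ℝ => M.mulVec w) := by
  have h : (fun w : n → ℝ => M.mulVec w)
      = ⇑(LinearMap.toContinuousLinearMap (Matrix.mulVecLin M)) := by
    funext w
    rw [LinearMap.coe_toContinuousLinearMap']
    rfl
  rw [h]
  exact (LinearMap.toContinuousLinearMap (Matrix.mulVecLin M)).contDiff

lemma xtmap_contDiff' {N P : ℕ} (Φ : Matrix (Fin P) (Fin N) ℝ) (y : Fin P → ℝ)
    (xs : Fin N → ℝ) : ContDiff ℝ 1 (xtmap' Φ y xs) := by
  have h : xtmap' Φ y xs = fun yb => xs +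
      (Ematrix' (suppF xs) * ((colsub Φ (suppF xs))ᵀ * (colsub Φ (suppF xs)))⁻¹
        * (colsub Φ (suppF xs))ᵀ).mulVec (yb - y) := by
    funext yb
    rw [xtmap', embed_eq_mulVec', Matrix.mulVec_mulVec, Matrix.mulVec_mulVec,
      Matrix.mul_assoc]
  rw [h]
  exact contDiff_const.add
    ((contDiff_mulVec' _).comp (contDiff_id.sub contDiff_const))

lemma xtmap_self' {N P : ℕ} (Φ : Matrix (Fin P) (Fin N) ℝ) (y : Fin P → ℝ)
    (xs : Fin N → ℝ) : xtmap' Φ y xs y = xs := by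
  rw [xtmap', sub_self, Matrix.mulVec_zero, Matrix.mulVec_zero]
  have h : embedI (suppF xs) (0 : ↥(suppF xs) → ℝ) = 0 := by
    funext i; rw [embedI]; split <;> rfl
  rw [h, add_zero]

lemma xtmap_zero' {N P : ℕ} (Φ : Matrix (Fin P) (Fin N) ℝ) (y : Fin P → ℝ)
    (xs : Fin N → ℝ) (yb : Fin P → ℝ) (i : Fin N) (hi : xs i = 0) :
    xtmap' Φ y xs yb i = 0 := by
  show xs i + embedI (suppF xs) _ i = 0
  rw [hi, embed_notmem' _ _ i (by rw [mem_suppF']; exact fun h => h hi), zero_add]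

lemma xtmap_res' {N P : ℕ} (Φ : Matrix (Fin P) (Fin N) ℝ) (y : Fin P → ℝ)
    (xs : Fin N → ℝ)
    (hli : LinearIndependent ℝ (fun i : ↥(suppF xs) => Φᵀ (i : Fin N)))
    (yb : Fin P → ℝ) (j : Fin N) (hj : xs j ≠ 0) :
    dotp (Φᵀ j) (yb - Φ.mulVec (xtmap' Φ y xs yb))
      = dotp (Φᵀ j) (y - Φ.mulVec xs) := by
  set I := suppF xs with hI
  set A := colsub Φ I with hA
  set G := Aᵀ * A with hG
  have hGinv : G * G⁻¹ = 1 := Matrix.mul_nonsing_inv G (gram_unit' Φ I hli)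
  set v : ↥I → ℝ := G⁻¹.mulVec (Aᵀ.mulVec (yb - y)) with hv
  have hsplit : yb - Φ.mulVec (xtmap' Φ y xs yb)
      = (y - Φ.mulVec xs) + ((yb - y) - A.mulVec v) := by
    have : Φ.mulVec (xtmap' Φ y xs yb) = Φ.mulVec xs + A.mulVec v := by
      rw [xtmap', Matrix.mulVec_add, mulVec_embed']
    rw [this]; abel
  have hjI : j ∈ I := (mem_suppF' xs j).mpr hj
  have e1 : ∀ w : Fin P → ℝ, (Aᵀ.mulVec w) ⟨j, hjI⟩ = dotp (Φᵀ j) w := fun w => rfl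
  have e2 : dotp (Φᵀ j) (A.mulVec v) = dotp (Φᵀ j) (yb - y) := by
    rw [← e1 (A.mulVec v), Matrix.mulVec_mulVec, ← hG, hv, Matrix.mulVec_mulVec,
      Matrix.mulVec_mulVec, hGinv, Matrix.one_mul, ← e1 (yb - y)]
  have e3 : dotp (Φᵀ j) ((yb - y) - A.mulVec v) = 0 := by
    rw [dotp_eq', dotProduct_sub, ← dotp_eq', ← dotp_eq', e2, sub_self]
  rw [hsplit, dotp_eq', dotProduct_add, ← dotp_eq', ← dotp_eq', e3, add_zero]

end Stmt14Aux

/-- local sensitivity of Lasso solutions. Under injectivity of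
`Φ_I` (`I = supp(x⋆)`) and strict dual feasibility off the support, there is an
open neighborhood `V` of `y` and a `C¹` (affine) map `x̃` on `V` with `x̃(y)=x⋆`,
`x̃(ȳ)` a Lasso minimizer at `ȳ` with support in `I`, and
`x̃(ȳ) = x⋆ + E_I (Φ_I^⊤Φ_I)⁻¹ Φ_I^⊤ (ȳ − y)`. -/
theorem stmt14 {N P : ℕ} (Φ : Matrix (Fin P) (Fin N) ℝ) (lam : ℝ) (hlam : 0 < lam)
    (y : Fin P → ℝ) (xs : Fin N → ℝ)
    (hmin : ∀ x, (1 / (2 * lam)) * nrm2 (Φ.mulVec xs - y) ^ 2 + l1norm xs ≤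
                 (1 / (2 * lam)) * nrm2 (Φ.mulVec x - y) ^ 2 + l1norm x)
    (hli : LinearIndependent ℝ (fun i : ↥(suppF xs) => Φᵀ (i : Fin N)))
    (hstrict : ∀ j, xs j = 0 → |dotp (Φᵀ j) (y - Φ.mulVec xs)| < lam) :
    ∃ V : Set (Fin P → ℝ), IsOpen V ∧ y ∈ V ∧
      ∃ xt : (Fin P → ℝ) → (Fin N → ℝ), ContDiffOn ℝ 1 xt V ∧ xt y = xs ∧
        ∀ ybar ∈ V,
          (∀ x, (1 / (2 * lam)) * nrm2 (Φ.mulVec (xt ybar) - ybar) ^ 2 + l1norm (xt ybar) ≤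
                (1 / (2 * lam)) * nrm2 (Φ.mulVec x - ybar) ^ 2 + l1norm x) ∧
          (∀ i, xt ybar i ≠ 0 → xs i ≠ 0) ∧
          xt ybar = xs + embedI (suppF xs)
            ((((colsub Φ (suppF xs))ᵀ * (colsub Φ (suppF xs)))⁻¹).mulVec
              ((colsub Φ (suppF xs))ᵀ.mulVec (ybar - y))) := by
  classical
  have hkkt : ∀ j, xs j ≠ 0 → dotp (Φᵀ j) (y - Φ.mulVec xs) = lam * sgn (xs j) :=
    kkt_support' Φ lam hlam y xs hmin
  set xt := xtmap' Φ y xs with hxtdef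
  have hCD : ContDiff ℝ 1 xt := xtmap_contDiff' Φ y xs
  have hcont : Continuous xt := hCD.continuous
  refine ⟨{yb | ∀ j : Fin N,
      (xs j ≠ 0 → |xt yb j - xs j| < |xs j|) ∧
      (xs j = 0 → |dotp (Φᵀ j) (yb - Φ.mulVec (xt yb))| < lam)}, ?_, ?_, ?_⟩
  · -- openness
    have hrw : {yb | ∀ j : Fin N,
        (xs j ≠ 0 → |xt yb j - xs j| < |xs j|) ∧
        (xs j = 0 → |dotp (Φᵀ j) (yb - Φ.mulVec (xt yb))| < lam)}
      = ⋂ j : Fin N, ({yb | xs j ≠ 0 → |xt yb j - xs j| < |xs j|} ∩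
          {yb | xs j = 0 → |dotp (Φᵀ j) (yb - Φ.mulVec (xt yb))| < lam}) := by
      ext yb
      simp only [Set.mem_iInter, Set.mem_inter_iff, Set.mem_setOf_eq]
    rw [hrw]
    refine isOpen_iInter_of_finite fun j => IsOpen.inter ?_ ?_
    · by_cases hj : xs j = 0
      · have : {yb | xs j ≠ 0 → |xt yb j - xs j| < |xs j|} = Set.univ := by
          ext yb; simp [hj]
        rw [this]; exact isOpen_univ
      · have : {yb | xs j ≠ 0 → |xt yb j - xs j| < |xs j|}
            = {yb | |xt yb j - xs j| < |xs j|} := by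
          ext yb; simp [hj]
        rw [this]
        exact isOpen_lt
          (Continuous.abs (((continuous_apply j).comp hcont).sub continuous_const))
          continuous_const
    · by_cases hj : xs j = 0
      · have heq : {yb | xs j = 0 → |dotp (Φᵀ j) (yb - Φ.mulVec (xt yb))| < lam}
            = {yb | |dotp (Φᵀ j) (yb - Φ.mulVec (xt yb))| < lam} := by
          ext yb; simp [hj]
        rw [heq]
        have hin : Continuous fun yb => yb - Φ.mulVec (xt yb) :=
          continuous_id.sub ((contDiff_mulVec' Φ).continuous.comp hcont)
        have hdp : Continuous fun yb => dotp (Φᵀ j) (yb - Φ.mulVec (xt yb)) := by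
          have : (fun yb => dotp (Φᵀ j) (yb - Φ.mulVec (xt yb)))
              = fun yb => ∑ p, Φᵀ j p * (yb - Φ.mulVec (xt yb)) p := rfl
          rw [this]
          exact continuous_finset_sum _ fun p _ =>
            continuous_const.mul ((continuous_apply p).comp hin)
        exact isOpen_lt hdp.abs continuous_const
      · have : {yb | xs j = 0 → |dotp (Φᵀ j) (yb - Φ.mulVec (xt yb))| < lam}
            = Set.univ := by
          ext yb; simp [hj]
        rw [this]; exact isOpen_univ
  · -- y ∈ V
    intro j
    constructor
    · intro hj
      rw [hxtdef, xtmap_self', sub_self, abs_zero]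
      exact abs_pos.mpr hj
    · intro hj
      rw [hxtdef, xtmap_self']
      exact hstrict j hj
  · refine ⟨xt, hCD.contDiffOn, xtmap_self' Φ y xs, ?_⟩
    intro ybar hyb
    refine ⟨?_, ?_, rfl⟩
    · -- minimality
      apply lasso_min' Φ lam hlam ybar (xt ybar)
      · intro j
        by_cases hj : xs j = 0
        · exact le_of_lt ((hyb j).2 hj)
        · rw [hxtdef, xtmap_res' Φ y xs hli ybar j hj, hkkt j hj, abs_mul,
            abs_of_pos hlam, sgn_abs' (xs j) hj, mul_one]
      · intro j
        by_cases hj : xs j = 0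
        · rw [hxtdef, xtmap_zero' Φ y xs ybar j hj]
          simp
        · rw [hxtdef, xtmap_res' Φ y xs hli ybar j hj, hkkt j hj, mul_assoc,
            abs_pert_sgn' (xs j) (xtmap' Φ y xs ybar j) ((hyb j).1 hj)]
    · -- support
      intro i hne hi
      exact hne (by rw [hxtdef]; exact xtmap_zero' Φ y xs ybar i hi)
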